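/- Suppose f admits the Lévy–Khinchine representation with pair (γ, G), where γ ∈ ℝ and G is a finite signed Borel measure on ℝ satisfying ∫_ℝ (1+x²) d|G|(x) < ∞. Then Ln f is twice differentiable on ℝ and (Ln f)''(t) = −∫_ℝ e^{itx}(1+x²) dG(x) for every t ∈ ℝ. -/

import Mathlib

open MeasureTheory Complex Filter Finset

/-- Characteristic function of a Borel measure on ℝ. -/
noncomputable def charFun (μ : MeasureTheory.Measure ℝ) (t : ℝ) : ℂ :=
  ∫ x, Complex.exp (Complex.I * t * x) ∂μ

/-- `g` is the distinguished logarithm of `f`: continuous, `g 0 = 0`, `exp ∘ g = f`. -/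
def IsDistinguishedLog (g f : ℝ → ℂ) : Prop :=
  Continuous g ∧ g 0 = 0 ∧ ∀ t : ℝ, Complex.exp (g t) = f t

/-- Integral of a complex function against a finite signed measure, via the
Jordan decomposition. -/
noncomputable def sInt (G : MeasureTheory.SignedMeasure ℝ) (φ : ℝ → ℂ) : ℂ :=
  (∫ x, φ x ∂G.toJordanDecomposition.posPart) -
    (∫ x, φ x ∂G.toJordanDecomposition.negPart)

/-- The Lévy–Khinchine integrand `K(t,x) = (e^{itx} - 1 - it sin x)(1+x²)/x²`,
with value `-t²/2` at `x = 0`. -/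
noncomputable def Kfun (t x : ℝ) : ℂ :=
  if x = 0 then -(t ^ 2) / 2
  else (Complex.exp (Complex.I * t * x) - 1 - Complex.I * t * Real.sin x) * (1 + x ^ 2) / x ^ 2

/-- The kernel `C(h,x) = (cos(hx) - 1)(1+x²)/x²`, with value `-h²/2` at `x = 0`. -/
noncomputable def Cfun (h x : ℝ) : ℂ :=
  if x = 0 then -(h ^ 2) / 2
  else ((Real.cos (h * x) - 1) * (1 + x ^ 2) / x ^ 2 : ℝ)

/-- `g` (the distinguished logarithm of `f`) is represented by the Lévy–Khinchine
formula with spectral pair `(γ, G)`. -/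
def HasLK (g : ℝ → ℂ) (γ : ℝ) (G : MeasureTheory.SignedMeasure ℝ) : Prop :=
  ∀ t : ℝ, g t = Complex.I * t * γ + sInt G (Kfun t)

/-- Symmetric second finite difference of `g` with step `h`. -/
def delta2 (g : ℝ → ℂ) (h t : ℝ) : ℂ := g (t - h) + g (t + h) - 2 * g t

/-- `n`-fold convolution power of a measure on ℝ. -/
noncomputable def convPow (ν : MeasureTheory.Measure ℝ) : ℕ → MeasureTheory.Measure ℝ
  | 0 => MeasureTheory.Measure.dirac 0
  | n + 1 => (convPow ν n).conv ν

/-- A probability measure `μ` on ℝ is infinitely divisible. -/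
def IsInfDiv (μ : MeasureTheory.Measure ℝ) : Prop :=
  ∀ n : ℕ, 0 < n → ∃ ν : MeasureTheory.Measure ℝ,
    MeasureTheory.IsProbabilityMeasure ν ∧ convPow ν n = μ

/-- A probability measure `μ` on ℝ is rationally infinitely divisible:
`μ₁ = μ ∗ μ₂` for some infinitely divisible probability measures `μ₁, μ₂`. -/
def IsRatInfDiv (μ : MeasureTheory.Measure ℝ) : Prop :=
  ∃ μ₁ μ₂ : MeasureTheory.Measure ℝ,
    MeasureTheory.IsProbabilityMeasure μ₁ ∧ MeasureTheory.IsProbabilityMeasure μ₂ ∧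
    IsInfDiv μ₁ ∧ IsInfDiv μ₂ ∧ μ₁ = μ.conv μ₂

section Helpers

open MeasureTheory Complex

noncomputable def K1 (t x : ℝ) : ℂ :=
  if x = 0 then -t
  else (Complex.I * x * Complex.exp (Complex.I * t * x) - Complex.I * Real.sin x) *
    (1 + (x : ℂ) ^ 2) / (x : ℂ) ^ 2

lemma hasDerivAt_mul_ofReal (c : ℂ) (t : ℝ) : HasDerivAt (fun s : ℝ => c * (s : ℂ)) c t := by
  have h : HasDerivAt (fun z : ℂ => c * z) c (t : ℂ) := by
    simpa using (hasDerivAt_id (t : ℂ)).const_mul c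
  exact h.comp_ofReal

lemma hasDerivAt_expc (c : ℂ) (t : ℝ) :
    HasDerivAt (fun s : ℝ => Complex.exp (c * s)) (c * Complex.exp (c * t)) t := by
  have h : HasDerivAt (fun z : ℂ => Complex.exp (c * z)) (Complex.exp (c * t) * c) (t : ℂ) := by
    simpa using ((hasDerivAt_id (t : ℂ)).const_mul c).cexp
  simpa [mul_comm] using h.comp_ofReal

lemma sub_sin_le {x : ℝ} (hx : |x| ≤ 1) : |x - Real.sin x| ≤ x ^ 2 := by
  have key : ∀ y : ℝ, 0 ≤ y → y ≤ 1 → |y - Real.sin y| ≤ y ^ 2 := by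
    intro y hy hy1
    rcases eq_or_lt_of_le hy with h | h
    · simp [← h]
    · have h1 : Real.sin y < y := Real.sin_lt h
      have h2 : y - y ^ 3 / 4 < Real.sin y := by have := Real.sin_gt_sub_cube h; nlinarith [pow_pos h 3]
      rw [_root_.abs_of_nonneg (by linarith)]
      nlinarith [sq_nonneg y]
  rcases le_total 0 x with h | h
  · exact key x h (by rwa [_root_.abs_of_nonneg h] at hx)
  · have h2 := key (-x) (by linarith) (by rwa [_root_.abs_of_nonpos h] at hx)
    rw [Real.sin_neg] at h2
    calc |x - Real.sin x| = |(-x) - -Real.sin x| := by rw [← abs_neg]; ring_nf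
    _ ≤ (-x) ^ 2 := h2
    _ = x ^ 2 := by ring

lemma norm_exp_I_sub_one_le (θ : ℝ) : ‖Complex.exp ((θ : ℂ) * Complex.I) - 1‖ ≤ 2 * |θ| := by
  rcases le_total |θ| 1 with h | h
  · have hz : ‖(θ : ℂ) * Complex.I‖ ≤ 1 := by simpa using h
    have := Complex.norm_exp_sub_one_le hz
    simpa using this
  · calc ‖Complex.exp ((θ : ℂ) * Complex.I) - 1‖
        ≤ ‖Complex.exp ((θ : ℂ) * Complex.I)‖ + ‖(1 : ℂ)‖ := norm_sub_le _ _
    _ = 2 := by rw [Complex.norm_exp_ofReal_mul_I]; norm_num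
    _ ≤ 2 * |θ| := by nlinarith

lemma norm_exp_Imul (t x : ℝ) : ‖Complex.exp (Complex.I * t * x)‖ = 1 := by
  rw [show Complex.I * (t : ℂ) * (x : ℂ) = ((t * x : ℝ) : ℂ) * Complex.I by push_cast; ring,
    Complex.norm_exp_ofReal_mul_I]

end Helpers


section Helpers2
open MeasureTheory Complex

lemma hasDerivAt_Kfun (x t : ℝ) : HasDerivAt (fun s : ℝ => Kfun s x) (K1 t x) t := by
  by_cases hx : x = 0
  · subst hx
    simp only [Kfun, if_pos rfl, K1]
    have h1 : HasDerivAt (fun s : ℝ => ((s : ℂ)) ^ 2) (2 * (t : ℂ)) t := by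
      have := ((hasDerivAt_id (t : ℂ)).pow 2).comp_ofReal
      simpa [mul_comm] using this
    have := (h1.neg).div_const 2
    refine this.congr_deriv (Eq.symm ?_); push_cast; ring
  · simp only [Kfun, K1, if_neg hx]
    have hfun : (fun s : ℝ => (Complex.exp (Complex.I * s * x) - 1 - Complex.I * s * Real.sin x) *
        (1 + (x : ℂ) ^ 2) / (x : ℂ) ^ 2)
        = fun s : ℝ => ((Complex.exp ((Complex.I * x) * s) - 1) - (Complex.I * Real.sin x) * s) *
          ((1 + (x : ℂ) ^ 2) / (x : ℂ) ^ 2) := by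
      funext s
      rw [mul_right_comm Complex.I (s : ℂ) (x : ℂ)]
      ring
    rw [hfun]
    have h := (((hasDerivAt_expc (Complex.I * x) t).sub_const 1).sub
      (hasDerivAt_mul_ofReal (Complex.I * Real.sin x) t)).mul_const
        ((1 + (x : ℂ) ^ 2) / (x : ℂ) ^ 2)
    refine h.congr_deriv (Eq.symm ?_)
    rw [mul_right_comm Complex.I (t : ℂ) (x : ℂ)]
    ring

lemma hasDerivAt_K1 (x t : ℝ) :
    HasDerivAt (fun s : ℝ => K1 s x)
      (-(Complex.exp (Complex.I * t * x) * (1 + (x : ℂ) ^ 2))) t := by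
  by_cases hx : x = 0
  · subst hx
    simp only [K1, eq_self_iff_true, if_true]
    have h : HasDerivAt (fun s : ℝ => -((1 : ℂ) * (s : ℂ))) (-(1 : ℂ)) t :=
      (hasDerivAt_mul_ofReal 1 t).neg
    have hfun : (fun s : ℝ => -((s : ℝ) : ℂ)) = fun s : ℝ => -((1 : ℂ) * (s : ℂ)) := by
      funext s; ring
    rw [hfun]
    convert h using 1
    simp
  · simp only [K1, if_neg hx]
    have hfun : (fun s : ℝ => (Complex.I * x * Complex.exp (Complex.I * s * x) -
        Complex.I * Real.sin x) * (1 + (x : ℂ) ^ 2) / (x : ℂ) ^ 2)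
        = fun s : ℝ => ((Complex.I * x) * Complex.exp ((Complex.I * x) * s) -
          (Complex.I * Real.sin x)) * ((1 + (x : ℂ) ^ 2) / (x : ℂ) ^ 2) := by
      funext s
      rw [mul_right_comm Complex.I (s : ℂ) (x : ℂ)]
      ring
    rw [hfun]
    have h := (((hasDerivAt_expc (Complex.I * x) t).const_mul (Complex.I * x)).sub_const
      (Complex.I * Real.sin x)).mul_const ((1 + (x : ℂ) ^ 2) / (x : ℂ) ^ 2)
    refine h.congr_deriv (Eq.symm ?_)
    rw [mul_right_comm Complex.I (t : ℂ) (x : ℂ)]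
    have hx2 : ((x : ℂ)) ^ 2 ≠ 0 := by
      simpa using pow_ne_zero 2 (Complex.ofReal_ne_zero.mpr hx)
    field_simp
    ring_nf
    simp [Complex.I_sq]
    have hx0 : (x : ℂ) ≠ 0 := Complex.ofReal_ne_zero.mpr hx
    rw [show (x : ℂ) ^ 3 = (x : ℂ) ^ 2 * x by ring, mul_assoc, mul_inv_cancel₀ hx0, mul_one]
    ring
end Helpers2

section Helpers3
open MeasureTheory Complex

lemma aux_div {C num x : ℝ} (hx : x ≠ 0) (h : num ≤ C * x ^ 2) (hC : 0 ≤ C) :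
    num * ((1 + x ^ 2) / x ^ 2) ≤ C * (1 + x ^ 2) := by
  have hx2 : 0 < x ^ 2 := by positivity
  have he : num * ((1 + x ^ 2) / x ^ 2) = num * (1 + x ^ 2) / x ^ 2 := by ring
  rw [he, div_le_iff₀ hx2]
  nlinarith [sq_nonneg x]

lemma norm_Kfun_le (t x : ℝ) :
    ‖Kfun t x‖ ≤ ((2 + |t|) * (1 + |t|) ^ 2 + |t| ^ 2 + |t|) * (1 + x ^ 2) := by
  have ht0 : (0:ℝ) ≤ |t| := abs_nonneg t
  have hC : (0:ℝ) ≤ (2 + |t|) * (1 + |t|) ^ 2 + |t| ^ 2 + |t| := by positivity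
  by_cases hx : x = 0
  · subst hx
    have h0 : Kfun t 0 = ((-t ^ 2 / 2 : ℝ) : ℂ) := by
      rw [show ((-t ^ 2 / 2 : ℝ) : ℂ) = -(t:ℂ) ^ 2 / 2 by push_cast; ring]
      exact if_pos rfl
    rw [h0, Complex.norm_real, Real.norm_eq_abs]
    have he : |(-t ^ 2 / 2)| = t ^ 2 / 2 := by
      rw [abs_div, abs_neg, _root_.abs_of_nonneg (sq_nonneg t), _root_.abs_two]
    rw [he]
    nlinarith [_root_.sq_abs t, abs_nonneg t, sq_nonneg t]
  · have h2 : Kfun t x = (Complex.exp (Complex.I * t * x) - 1 - Complex.I * t * Real.sin x) *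
        (((1 + x ^ 2) / x ^ 2 : ℝ) : ℂ) := by
      simp only [Kfun, if_neg hx]; push_cast; ring
    have hx2 : (0:ℝ) < x ^ 2 := by positivity
    rw [h2, norm_mul, Complex.norm_real, Real.norm_eq_abs,
      _root_.abs_of_pos (by positivity : (0:ℝ) < (1 + x ^ 2) / x ^ 2)]
    have hnum : ‖Complex.exp (Complex.I * t * x) - 1 - Complex.I * t * Real.sin x‖
        ≤ ((2 + |t|) * (1 + |t|) ^ 2 + |t| ^ 2 + |t|) * x ^ 2 := by
      rcases le_or_gt |x| (1 / (1 + |t|)) with hsmall | hbig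
      · have hx1 : |x| ≤ 1 := by
          refine hsmall.trans ?_
          rw [div_le_one (by linarith)]; linarith
        have htx : ‖Complex.I * t * x‖ ≤ 1 := by
          rw [norm_mul, norm_mul, Complex.norm_I, Complex.norm_real, Real.norm_eq_abs,
            Complex.norm_real, Real.norm_eq_abs, one_mul]
          calc |t| * |x| ≤ |t| * (1 / (1 + |t|)) :=
                mul_le_mul_of_nonneg_left hsmall ht0
          _ ≤ 1 := by rw [mul_one_div, div_le_one (by linarith)]; linarith
        have hA := Complex.norm_exp_sub_one_sub_id_le htx
        have hB : ‖Complex.I * t * ((x : ℂ) - Real.sin x)‖ ≤ |t| * x ^ 2 := by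
          rw [norm_mul, norm_mul, Complex.norm_I, one_mul, Complex.norm_real,
            Real.norm_eq_abs, show ((x:ℂ) - Real.sin x) = ((x - Real.sin x : ℝ) : ℂ) by
              push_cast; ring, Complex.norm_real, Real.norm_eq_abs]
          exact mul_le_mul_of_nonneg_left (sub_sin_le hx1) ht0
        calc ‖Complex.exp (Complex.I * t * x) - 1 - Complex.I * t * Real.sin x‖
            = ‖(Complex.exp (Complex.I * t * x) - 1 - Complex.I * t * x) +
              Complex.I * t * ((x : ℂ) - Real.sin x)‖ := by ring_nf
        _ ≤ ‖Complex.exp (Complex.I * t * x) - 1 - Complex.I * t * x‖ +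
              ‖Complex.I * t * ((x : ℂ) - Real.sin x)‖ := norm_add_le _ _
        _ ≤ ‖Complex.I * t * x‖ ^ 2 + |t| * x ^ 2 := by
              exact add_le_add hA hB
        _ ≤ |t| ^ 2 * x ^ 2 + |t| * x ^ 2 := by
              simp only [norm_mul, Complex.norm_I, Complex.norm_real, Real.norm_eq_abs, one_mul, mul_pow,
                _root_.sq_abs]
              exact le_refl _
        _ ≤ ((2 + |t|) * (1 + |t|) ^ 2 + |t| ^ 2 + |t|) * x ^ 2 := by
              nlinarith [sq_nonneg x, mul_nonneg (mul_nonneg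
                (by positivity : (0:ℝ) ≤ 2 + |t|) (by positivity : (0:ℝ) ≤ (1 + |t|) ^ 2))
                (sq_nonneg x)]
      · have h0 : (0:ℝ) < 1 + |t| := by positivity
        have ha : 1 < |x| * (1 + |t|) := (div_lt_iff₀ h0).mp hbig
        have h1x : 1 ≤ (1 + |t|) ^ 2 * x ^ 2 := by
          nlinarith [ha, abs_nonneg x, _root_.sq_abs x]
        have hnum2 : ‖Complex.exp (Complex.I * t * x) - 1 - Complex.I * t * Real.sin x‖
            ≤ 2 + |t| := by
          calc ‖Complex.exp (Complex.I * t * x) - 1 - Complex.I * t * Real.sin x‖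
              ≤ ‖Complex.exp (Complex.I * t * x) - 1‖ + ‖Complex.I * t * Real.sin x‖ :=
                norm_sub_le _ _
          _ ≤ (‖Complex.exp (Complex.I * t * x)‖ + ‖(1:ℂ)‖) + |t| * |Real.sin x| := by
                gcongr
                · exact norm_sub_le _ _
                · rw [norm_mul, norm_mul, Complex.norm_I, one_mul, Complex.norm_real,
                    Real.norm_eq_abs, Complex.norm_real, Real.norm_eq_abs]
          _ ≤ (1 + 1) + |t| * 1 := by
                rw [norm_exp_Imul, norm_one]
                gcongr
                exact abs_le.mpr ⟨Real.neg_one_le_sin x, Real.sin_le_one x⟩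
          _ = 2 + |t| := by ring
        calc ‖Complex.exp (Complex.I * t * x) - 1 - Complex.I * t * Real.sin x‖
            ≤ 2 + |t| := hnum2
        _ = (2 + |t|) * 1 := by ring
        _ ≤ (2 + |t|) * ((1 + |t|) ^ 2 * x ^ 2) := by nlinarith [h1x]
        _ ≤ ((2 + |t|) * (1 + |t|) ^ 2 + |t| ^ 2 + |t|) * x ^ 2 := by
              nlinarith [mul_nonneg (by positivity : (0:ℝ) ≤ |t| ^ 2 + |t|) (sq_nonneg x)]
    exact aux_div hx hnum hC

end Helpers3

section Helpers4
open MeasureTheory Complex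

lemma norm_K1_le {T : ℝ} (t x : ℝ) (hT : |t| ≤ T) : ‖K1 t x‖ ≤ (2 * T + 3) * (1 + x ^ 2) := by
  have hT0 : (0:ℝ) ≤ T := (abs_nonneg t).trans hT
  by_cases hx : x = 0
  · subst hx
    have h0 : K1 t 0 = ((-t : ℝ) : ℂ) := by
      rw [show ((-t : ℝ) : ℂ) = -(t:ℂ) by push_cast; ring]
      exact if_pos rfl
    rw [h0, Complex.norm_real, Real.norm_eq_abs, abs_neg]
    nlinarith
  · have h2 : K1 t x = Complex.I * ((x : ℂ) * Complex.exp (Complex.I * t * x) - Real.sin x) *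
        (((1 + x ^ 2) / x ^ 2 : ℝ) : ℂ) := by
      simp only [K1, if_neg hx]; push_cast; ring
    have hx2 : (0:ℝ) < x ^ 2 := by positivity
    rw [h2, norm_mul, norm_mul, Complex.norm_I, one_mul, Complex.norm_real, Real.norm_eq_abs,
      _root_.abs_of_pos (by positivity : (0:ℝ) < (1 + x ^ 2) / x ^ 2)]
    have hnum : ‖(x : ℂ) * Complex.exp (Complex.I * t * x) - Real.sin x‖ ≤ (2 * T + 3) * x ^ 2 := by
      rcases le_or_gt |x| 1 with hx1 | hx1
      · have hA : ‖(x : ℂ) * (Complex.exp (Complex.I * t * x) - 1)‖ ≤ 2 * T * x ^ 2 := by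
          rw [norm_mul, Complex.norm_real, Real.norm_eq_abs]
          have he : Complex.I * (t:ℂ) * (x:ℂ) = ((t * x : ℝ) : ℂ) * Complex.I := by
            push_cast; ring
          rw [he]
          calc |x| * ‖Complex.exp (((t * x : ℝ) : ℂ) * Complex.I) - 1‖
              ≤ |x| * (2 * |t * x|) :=
                mul_le_mul_of_nonneg_left (norm_exp_I_sub_one_le (t * x)) (abs_nonneg x)
          _ = 2 * |t| * (|x| * |x|) := by rw [abs_mul]; ring
          _ ≤ 2 * T * x ^ 2 := by
                rw [← _root_.sq_abs x, sq]
                gcongr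
        have hB : ‖((x : ℂ) - Real.sin x)‖ ≤ x ^ 2 := by
          rw [show ((x:ℂ) - Real.sin x) = ((x - Real.sin x : ℝ) : ℂ) by push_cast; ring,
            Complex.norm_real, Real.norm_eq_abs]
          exact sub_sin_le hx1
        calc ‖(x : ℂ) * Complex.exp (Complex.I * t * x) - Real.sin x‖
            = ‖(x : ℂ) * (Complex.exp (Complex.I * t * x) - 1) + ((x : ℂ) - Real.sin x)‖ := by
              ring_nf
        _ ≤ ‖(x : ℂ) * (Complex.exp (Complex.I * t * x) - 1)‖ + ‖((x : ℂ) - Real.sin x)‖ :=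
              norm_add_le _ _
        _ ≤ 2 * T * x ^ 2 + x ^ 2 := add_le_add hA hB
        _ ≤ (2 * T + 3) * x ^ 2 := by nlinarith [sq_nonneg x]
      · have h1x : 1 ≤ x ^ 2 := by nlinarith [_root_.sq_abs x]
        calc ‖(x : ℂ) * Complex.exp (Complex.I * t * x) - Real.sin x‖
            ≤ ‖(x : ℂ) * Complex.exp (Complex.I * t * x)‖ + ‖((Real.sin x : ℝ) : ℂ)‖ :=
              norm_sub_le _ _
        _ = |x| + |Real.sin x| := by
              rw [norm_mul, Complex.norm_real, Real.norm_eq_abs, norm_exp_Imul, mul_one,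
                Complex.norm_real, Real.norm_eq_abs]
        _ ≤ x ^ 2 + 1 := by
              gcongr
              · nlinarith [abs_nonneg x, _root_.sq_abs x]
              · exact abs_le.mpr ⟨Real.neg_one_le_sin x, Real.sin_le_one x⟩
        _ ≤ (2 * T + 3) * x ^ 2 := by nlinarith
    exact aux_div hx hnum (by positivity)

lemma norm_K2_eq (t x : ℝ) :
    ‖-(Complex.exp (Complex.I * t * x) * (1 + (x : ℂ) ^ 2))‖ = 1 + x ^ 2 := by
  rw [norm_neg, norm_mul, norm_exp_Imul, one_mul,
    show (1 + (x:ℂ) ^ 2) = ((1 + x ^ 2 : ℝ) : ℂ) by push_cast; ring,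
    Complex.norm_real, Real.norm_eq_abs, _root_.abs_of_pos (by positivity)]

lemma measurable_Kfun (t : ℝ) : Measurable (fun x => Kfun t x) := by
  unfold Kfun
  exact Measurable.ite (measurableSet_eq) measurable_const (by fun_prop)

lemma measurable_K1 (t : ℝ) : Measurable (fun x => K1 t x) := by
  unfold K1
  exact Measurable.ite (measurableSet_eq) measurable_const (by fun_prop)

lemma measurable_K2 (t : ℝ) :
    Measurable (fun x : ℝ => -(Complex.exp (Complex.I * t * x) * (1 + (x : ℂ) ^ 2))) := by
  fun_prop

end Helpers4

section Helpers5
open MeasureTheory Complex Metric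

lemma key_deriv (ν : MeasureTheory.Measure ℝ) [IsFiniteMeasure ν]
    (hi : Integrable (fun x : ℝ => 1 + x ^ 2) ν) (t₀ : ℝ) :
    (HasDerivAt (fun t => ∫ x, Kfun t x ∂ν) (∫ x, K1 t₀ x ∂ν) t₀) ∧
    (HasDerivAt (fun t => ∫ x, K1 t x ∂ν)
      (∫ x, -(Complex.exp (Complex.I * t₀ * x) * (1 + (x : ℂ) ^ 2)) ∂ν) t₀) := by
  have hmeasK : ∀ᶠ t in nhds t₀, AEStronglyMeasurable (fun x => Kfun t x) ν :=
    Filter.Eventually.of_forall fun t => (measurable_Kfun t).aestronglyMeasurable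
  have hintK : Integrable (fun x => Kfun t₀ x) ν := by
    refine (hi.const_mul ((2 + |t₀|) * (1 + |t₀|) ^ 2 + |t₀| ^ 2 + |t₀|)).mono'
      (measurable_Kfun t₀).aestronglyMeasurable ?_
    exact Filter.Eventually.of_forall fun x => norm_Kfun_le t₀ x
  have h1 := hasDerivAt_integral_of_dominated_loc_of_deriv_le (F := fun t x => Kfun t x)
    (F' := fun t x => K1 t x) (bound := fun x => (2 * (|t₀| + 1) + 3) * (1 + x ^ 2))
    (Metric.ball_mem_nhds t₀ one_pos) hmeasK hintK (measurable_K1 t₀).aestronglyMeasurable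
    (Filter.Eventually.of_forall fun x => fun t ht => by
      refine norm_K1_le t x ?_
      have := mem_ball_iff_norm.mp ht
      rw [Real.norm_eq_abs] at this
      have := abs_sub_abs_le_abs_sub t t₀
      linarith [abs_sub_abs_le_abs_sub t t₀, mem_ball_iff_norm.mp ht,
        (Real.norm_eq_abs (t - t₀)) ▸ mem_ball_iff_norm.mp ht])
    (hi.const_mul _)
    (Filter.Eventually.of_forall fun x => fun t _ => hasDerivAt_Kfun x t)
  have h2 := hasDerivAt_integral_of_dominated_loc_of_deriv_le (F := fun t x => K1 t x)
    (F' := fun t x => -(Complex.exp (Complex.I * t * x) * (1 + (x : ℂ) ^ 2)))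
    (bound := fun x => 1 + x ^ 2)
    (Metric.ball_mem_nhds t₀ one_pos) (Filter.Eventually.of_forall fun t => (measurable_K1 t).aestronglyMeasurable)
    h1.1 (measurable_K2 t₀).aestronglyMeasurable
    (Filter.Eventually.of_forall fun x => fun t _ => le_of_eq (norm_K2_eq t x))
    hi
    (Filter.Eventually.of_forall fun x => fun t _ => hasDerivAt_K1 x t)
  exact ⟨h1.2, h2.2⟩

end Helpers5


/-- if `f` has a Lévy–Khinchine representation with pair `(γ, G)` and
`∫ (1+x²) d|G|(x) < ∞`, then `Ln f` is twice differentiable with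
`(Ln f)''(t) = -∫ e^{itx}(1+x²) dG(x)`. -/
theorem secondDeriv_of_hasLK (μ : MeasureTheory.Measure ℝ)
    [MeasureTheory.IsProbabilityMeasure μ]
    (g : ℝ → ℂ) (hf : ∀ t : ℝ, _root_.charFun μ t ≠ 0)
    (hg : IsDistinguishedLog g (_root_.charFun μ))
    (γ : ℝ) (G : MeasureTheory.SignedMeasure ℝ) (hLK : HasLK g γ G)
    (hmom : MeasureTheory.Integrable (fun x : ℝ => 1 + x ^ 2) G.totalVariation) :
    ∃ g' : ℝ → ℂ, (∀ t : ℝ, HasDerivAt g (g' t) t) ∧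
      ∀ t : ℝ, HasDerivAt g'
        (-sInt G (fun x => Complex.exp (Complex.I * t * x) * (1 + (x : ℂ) ^ 2))) t := by
  have hmom' : MeasureTheory.Integrable (fun x : ℝ => 1 + x ^ 2)
      (G.toJordanDecomposition.posPart + G.toJordanDecomposition.negPart) := hmom
  have hiP := (MeasureTheory.integrable_add_measure.mp hmom').1
  have hiN := (MeasureTheory.integrable_add_measure.mp hmom').2
  refine ⟨fun t => Complex.I * γ + ((∫ x, K1 t x ∂G.toJordanDecomposition.posPart) -
    ∫ x, K1 t x ∂G.toJordanDecomposition.negPart), ?_, ?_⟩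
  · intro t
    have hgeq : g = fun s : ℝ => Complex.I * s * γ +
        ((∫ x, Kfun s x ∂G.toJordanDecomposition.posPart) -
          ∫ x, Kfun s x ∂G.toJordanDecomposition.negPart) := by
      funext s; exact hLK s
    rw [hgeq]
    have hlin : HasDerivAt (fun s : ℝ => Complex.I * s * γ) (Complex.I * γ) t := by
      have hfun : (fun s : ℝ => Complex.I * (s : ℂ) * (γ : ℂ))
          = fun s : ℝ => (Complex.I * γ) * (s : ℂ) := by funext s; ring
      rw [hfun]; exact hasDerivAt_mul_ofReal (Complex.I * γ) t
    exact hlin.add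
      (((key_deriv G.toJordanDecomposition.posPart hiP t).1).sub
        ((key_deriv G.toJordanDecomposition.negPart hiN t).1))
  · intro t
    have h := ((((key_deriv G.toJordanDecomposition.posPart hiP t).2).sub
      ((key_deriv G.toJordanDecomposition.negPart hiN t).2)).const_add (Complex.I * (γ : ℂ)))
    refine h.congr_deriv (Eq.symm ?_)
    simp only [sInt, MeasureTheory.integral_neg]
    ring
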